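/- Let A be a totally unimodular matrix with columns indexed by E realizing a regular matroid M, and let P be a vector in the row space of A with all entries in {-1,0,1}. Then P can be written as a sum of signed cocircuits of M with pairwise disjoint supports, each agreeing in sign with P on its support. -/

import Mathlib

open Matrix

/-- The support of a vector. -/
def supp {α : Type*} (v : α → ℝ) : Set α := {x | v x ≠ 0}

/-- A vector is simple if all entries lie in `{-1,0,1}`. -/
def Simple {α : Type*} (v : α → ℝ) : Prop := ∀ x, v x = -1 ∨ v x = 0 ∨ v x = 1

/-- A signed circuit of the regular matroid realized by `A`: a simple kernel vector
with support minimal among supports of nonzero kernel vectors. -/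
def SignedCircuit {m E : Type*} [Fintype E] (A : Matrix m E ℝ) (C : E → ℝ) : Prop :=
  A.mulVec C = 0 ∧ C ≠ 0 ∧ Simple C ∧
    ∀ D : E → ℝ, A.mulVec D = 0 → D ≠ 0 → supp D ⊆ supp C → supp D = supp C

/-- A signed cocircuit: a simple row-space vector with support minimal among
supports of nonzero row-space vectors. -/
def SignedCocircuit {m E : Type*} [Fintype m] (A : Matrix m E ℝ) (C : E → ℝ) : Prop :=
  (∃ y, Matrix.vecMul y A = C) ∧ C ≠ 0 ∧ Simple C ∧
    ∀ D : E → ℝ, (∃ y, Matrix.vecMul y A = D) → D ≠ 0 → supp D ⊆ supp C → supp D = supp C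

section Auxiliary

open Set Submodule

lemma mem_supp {α : Type*} {v : α → ℝ} {x : α} : x ∈ supp v ↔ v x ≠ 0 := Iff.rfl


lemma exists_invertible_submatrix {r : ℕ} {m : Type*} [Fintype m]
    (v : Fin r → (m → ℝ)) (hv : LinearIndependent ℝ v) :
    ∃ ι : Fin r → m, IsUnit (Matrix.of fun k l => v k (ι l)) := by
  classical
  set W : Matrix (Fin r) m ℝ := Matrix.of v with hW
  have hrankT : Wᵀ.rank = r := by
    rw [Matrix.rank_eq_finrank_span_cols, Matrix.col, Matrix.transpose_transpose]
    have : Set.range W = Set.range v := rfl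
    rw [this, finrank_span_eq_card hv, Fintype.card_fin]
  have hrank : W.rank = r := by rw [← Matrix.rank_transpose, hrankT]
  have htop : Submodule.span ℝ (Set.range Wᵀ) = ⊤ := by
    apply Submodule.eq_top_of_finrank_eq
    rw [show Set.range Wᵀ = Set.range W.col from rfl, ← Matrix.rank_eq_finrank_span_cols, hrank,
      Module.finrank_fintype_fun_eq_card, Fintype.card_fin]
  obtain ⟨b, hbsub, hbspan, hbind⟩ := exists_linearIndependent ℝ (Set.range Wᵀ)
  rw [htop] at hbspan
  have hbfin : b.Finite := (Set.finite_range Wᵀ).subset hbsub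
  haveI : Fintype ↑b := hbfin.fintype
  have hbcard : Fintype.card ↑b = r := by
    have h1 : Module.finrank ℝ (Submodule.span ℝ b) = r := by
      rw [hbspan, finrank_top, Module.finrank_fintype_fun_eq_card, Fintype.card_fin]
    have h2 := finrank_span_set_eq_card (s := b) hbind
    rw [h1, Set.toFinset_card] at h2
    omega
  obtain (e : Fin r ≃ ↑b) := (Fintype.equivFinOfCardEq hbcard).symm
  -- choose preimage columns
  have hchoice : ∀ k : Fin r, ∃ i : m, Wᵀ i = (e k : Fin r → ℝ) := fun k => hbsub (e k).2
  choose ι hι using hchoice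
  refine ⟨ι, ?_⟩
  rw [← Matrix.linearIndependent_cols_iff_isUnit]
  have hcol : (fun l => (Matrix.of fun k l => v k (ι l))ᵀ l) = fun l => ((e l : Fin r → ℝ)) := by
    funext l
    have := hι l
    funext k
    exact congrFun this k ▸ rfl
  rw [show (Matrix.of fun k l => v k (ι l)).col = fun l => ((e l : Fin r → ℝ)) from hcol]
  exact hbind.comp e e.injective

lemma simple_of_minimal_support {m E : Type*} [Fintype m] [Fintype E]
    {A : Matrix m E ℝ} (hA : A.IsTotallyUnimodular) {w : E → ℝ} {y₀ : m → ℝ}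
    (hy₀ : Matrix.vecMul y₀ A = w) {x₀ : E} (hx₀ : w x₀ = 1)
    (hmin : ∀ D : E → ℝ, (∃ y, Matrix.vecMul y A = D) → D ≠ 0 → supp D ⊆ supp w →
      supp D = supp w) :
    Simple w := by
  classical
  set t : E → (m → ℝ) := fun e i => A i e with ht
  have hpair : ∀ e, (∑ i, y₀ i * t e i) = w e := by
    intro e; rw [← hy₀]; simp [Matrix.vecMul, dotProduct, t]
  have htx₀ : t x₀ ∉ Submodule.span ℝ (t '' {e | w e = 0}) := by
    intro hmem
    have hzero : ∀ z ∈ Submodule.span ℝ (t '' {e | w e = 0}), (∑ i, y₀ i * z i) = 0 := by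
      intro z hz
      induction hz using Submodule.span_induction with
      | mem x hx =>
        obtain ⟨e, he, rfl⟩ := hx
        rw [hpair]; exact he
      | zero => simp
      | add x y _ _ hx hy => simp [mul_add, Finset.sum_add_distrib, hx, hy]
      | smul c x _ hx =>
        simp only [Pi.smul_apply, smul_eq_mul]
        rw [show (∑ i, y₀ i * (c * x i)) = c * ∑ i, y₀ i * x i by
          rw [Finset.mul_sum]; exact Finset.sum_congr rfl fun i _ => by ring, hx, mul_zero]
    have h1 := hzero _ hmem
    rw [hpair, hx₀] at h1
    norm_num at h1
  obtain ⟨s, hssub, hsspan, hsind⟩ := exists_linearIndependent ℝ (t '' {e | w e = 0})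
  have hsfin : s.Finite := ((Set.toFinite _).image t).subset hssub
  haveI : Fintype ↑s := hsfin.fintype
  set r' := Fintype.card ↑s with hr'
  obtain (es : Fin r' ≃ ↑s) := (Fintype.equivFin ↑s).symm
  set u : Fin r' → (m → ℝ) := fun k => (es k : m → ℝ) with hu
  have hu_ind : LinearIndependent ℝ u := hsind.comp es es.injective
  have hu_range : Set.range u = s := by
    rw [show u = Subtype.val ∘ es from rfl, Set.range_comp, Equiv.range_eq_univ,
      Set.image_univ, Subtype.range_coe]
  have hchoice : ∀ k : Fin r', ∃ e, w e = 0 ∧ t e = u k := by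
    intro k
    obtain ⟨e, he, heq⟩ := hssub (es k).2
    exact ⟨e, he, heq⟩
  choose β' hβ'0 hβ't using hchoice
  set β : Fin (r' + 1) → E := Fin.cons x₀ β' with hβ
  have htβ : t ∘ β = Fin.cons (t x₀) u := by
    rw [hβ, Fin.comp_cons, show t ∘ β' = u from funext hβ't]
  have hind : LinearIndependent ℝ (t ∘ β) := by
    rw [htβ]
    refine hu_ind.fin_cons ?_
    rw [hu_range, hsspan]
    exact htx₀
  obtain ⟨ι, hM⟩ := exists_invertible_submatrix (t ∘ β) hind
  set N : Matrix (Fin (r' + 1)) (Fin (r' + 1)) ℝ := A.submatrix ι β with hN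
  have hNunit : IsUnit N := by
    rw [Matrix.isUnit_iff_isUnit_det, ← Matrix.det_transpose]
    have hNT : Nᵀ = Matrix.of fun k l => (t ∘ β) k (ι l) := by
      ext k l
      simp [hN, ht, Matrix.transpose_apply, Matrix.submatrix_apply]
    rw [hNT, ← Matrix.isUnit_iff_isUnit_det]
    exact hM
  have hNdet : IsUnit N.det := (Matrix.isUnit_iff_isUnit_det _).mp hNunit
  have hNdet0 : N.det ≠ 0 := hNdet.ne_zero
  set k₀ : Fin (r' + 1) := 0 with hk₀
  set col : E → (Fin (r' + 1) → ℝ) := fun e k => A (ι k) e with hcol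
  set v : E → ℝ := fun e => (N⁻¹ *ᵥ col e) k₀ with hv
  -- (a) values on the β columns
  have hvβ : ∀ l, v (β l) = (1 : Matrix (Fin (r' + 1)) (Fin (r' + 1)) ℝ) k₀ l := by
    intro l
    have h1 : v (β l) = (N⁻¹ * N) k₀ l := by
      simp [hv, Matrix.mulVec, dotProduct, Matrix.mul_apply, hcol, hN,
        Matrix.submatrix_apply]
    rw [h1, Matrix.nonsing_inv_mul _ hNdet]
  -- (b) vanishing outside supp w
  have hv0 : ∀ e, w e = 0 → v e = 0 := by
    intro e he
    have hte : t e ∈ Submodule.span ℝ (Set.range u) := by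
      rw [hu_range, hsspan]
      exact Submodule.subset_span ⟨e, he, rfl⟩
    obtain ⟨c, hc⟩ := (mem_span_range_iff_exists_fun ℝ).mp hte
    set c' : Fin (r' + 1) → ℝ := Fin.cons 0 c with hc'
    have hcol_e : col e = N *ᵥ c' := by
      funext k
      have h2 : t e (ι k) = ∑ l, c' l * t (β l) (ι k) := by
        rw [← hc]
        rw [Fin.sum_univ_succ]
        simp only [hc', Fin.cons_zero, Fin.cons_succ, zero_mul, zero_add, hβ,
          Finset.sum_apply, Pi.smul_apply, smul_eq_mul]
        refine Finset.sum_congr rfl fun l _ => ?_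
        rw [hβ't l]
      show A (ι k) e = ∑ l, N k l * c' l
      calc A (ι k) e = t e (ι k) := rfl
        _ = ∑ l, c' l * t (β l) (ι k) := h2
        _ = ∑ l, N k l * c' l := by
            refine Finset.sum_congr rfl fun l _ => ?_
            simp [hN, ht, Matrix.submatrix_apply, mul_comm]
    have h3 : v e = c' k₀ := by
      rw [hv]
      show (N⁻¹ *ᵥ col e) k₀ = c' k₀
      rw [hcol_e, Matrix.mulVec_mulVec, Matrix.nonsing_inv_mul _ hNdet, Matrix.one_mulVec]
    rw [h3, hc', hk₀]
    simp
  -- (c) v is in the row space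
  have hv_row : ∃ y, Matrix.vecMul y A = v := by
    refine ⟨fun i => ∑ k, if ι k = i then N⁻¹ k₀ k else 0, ?_⟩
    funext e
    show (∑ i, (∑ k, if ι k = i then N⁻¹ k₀ k else 0) * A i e) = v e
    have hrhs : v e = ∑ k, N⁻¹ k₀ k * A (ι k) e := by
      rw [hv]
      show (N⁻¹ *ᵥ col e) k₀ = _
      simp [Matrix.mulVec, dotProduct, hcol]
    rw [hrhs]
    calc (∑ i, (∑ k, if ι k = i then N⁻¹ k₀ k else 0) * A i e)
        = ∑ i, ∑ k, (if ι k = i then N⁻¹ k₀ k else 0) * A i e := by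
          exact Finset.sum_congr rfl fun i _ => Finset.sum_mul _ _ _
      _ = ∑ k, ∑ i, (if ι k = i then N⁻¹ k₀ k else 0) * A i e := Finset.sum_comm
      _ = ∑ k, N⁻¹ k₀ k * A (ι k) e := by
          refine Finset.sum_congr rfl fun k _ => ?_
          rw [Finset.sum_eq_single (ι k)]
          · simp
          · intro i _ hne
            simp [Ne.symm hne]
          · intro h; exact absurd (Finset.mem_univ _) h
  -- (d) v = w
  have hvw : v = w := by
    by_contra hne
    have hD : v - w ≠ 0 := sub_ne_zero.mpr hne
    have hDrow : ∃ y, Matrix.vecMul y A = v - w := by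
      obtain ⟨y, hy⟩ := hv_row
      exact ⟨y - y₀, by rw [Matrix.sub_vecMul, hy, hy₀]⟩
    have hDsupp : supp (v - w) ⊆ supp w := by
      intro e he
      by_contra hew
      simp only [supp, Set.mem_setOf_eq, not_not] at hew
      exact he (by simp [Pi.sub_apply, hv0 e hew, hew])
    have := hmin _ hDrow hD hDsupp
    have hx₀w : x₀ ∈ supp w := by simp [supp, hx₀]
    rw [← this] at hx₀w
    apply hx₀w
    show v x₀ - w x₀ = 0
    have : v x₀ = 1 := by
      have := hvβ 0
      rw [hβ] at this
      simpa [Matrix.one_apply, hk₀] using this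
    rw [this, hx₀]; ring
  -- (e) conclude simplicity via Cramer and total unimodularity
  intro e
  have hupdate : N.updateCol k₀ (col e) = A.submatrix ι (Function.update β k₀ e) := by
    ext k l
    rw [Matrix.updateCol_apply, Matrix.submatrix_apply, Function.update_apply]
    split
    · simp [hcol]
    · simp [hN, Matrix.submatrix_apply]
  have hve : w e = (N.det)⁻¹ * (A.submatrix ι (Function.update β k₀ e)).det := by
    rw [← hvw, hv]
    show (N⁻¹ *ᵥ col e) k₀ = _
    rw [Matrix.inv_def, Ring.inverse_eq_inv, Matrix.smul_mulVec,
      ← Matrix.cramer_eq_adjugate_mulVec]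
    simp [Matrix.cramer_apply, hupdate]
  obtain ⟨s1, hs1⟩ := (Matrix.isTotallyUnimodular_iff A).mp hA _ ι (Function.update β k₀ e)
  obtain ⟨s2, hs2⟩ := (Matrix.isTotallyUnimodular_iff A).mp hA _ ι β
  rw [← hN] at hs2
  have hd2 : N.det = 1 ∨ N.det = -1 := by
    rcases s2 with _ | _ | _
    · rw [← hs2] at hNdet0; simp at hNdet0
    · right; rw [← hs2]; simp
    · left; rw [← hs2]; simp
  have hd1 : (A.submatrix ι (Function.update β k₀ e)).det = -1 ∨
      (A.submatrix ι (Function.update β k₀ e)).det = 0 ∨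
      (A.submatrix ι (Function.update β k₀ e)).det = 1 := by
    rcases s1 with _ | _ | _
    · right; left; rw [← hs1]; simp
    · left; rw [← hs1]; simp
    · right; right; rw [← hs1]; simp
  rw [hve]
  rcases hd2 with h2 | h2 <;> rcases hd1 with h1 | h1 | h1 <;> rw [h1, h2] <;> norm_num

lemma sign_key {a b : ℝ} (h : |b| ≤ |a|) (h2 : a - b ≠ 0) : 0 < (a - b) * a := by
  have ha : a ≠ 0 := by
    rintro rfl
    rw [abs_zero] at h
    rw [abs_nonpos_iff.mp h] at h2
    simp at h2
  have hnz : (a - b) * a ≠ 0 := mul_ne_zero h2 ha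
  have habs : |b| * |a| ≤ |a| * |a| := mul_le_mul_of_nonneg_right h (abs_nonneg a)
  have hge : 0 ≤ (a - b) * a := by
    nlinarith [le_abs_self (b * a), abs_mul b a, sq_abs a, abs_nonneg a]
  exact lt_of_le_of_ne hge (Ne.symm hnz)

lemma exists_min_on_set {α : Type*} {S : Set α} (hS : S.Nonempty) (f : α → ℕ) :
    ∃ a ∈ S, ∀ b ∈ S, f a ≤ f b := by
  classical
  obtain ⟨a0, ha0⟩ := hS
  have hne : ∃ n, ∃ a ∈ S, f a = n := ⟨f a0, a0, ha0, rfl⟩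
  obtain ⟨a, haS, hfa⟩ := Nat.find_spec hne
  exact ⟨a, haS, fun b hb => by rw [hfa]; exact Nat.find_le ⟨b, hb, rfl⟩⟩

lemma exists_conformal_cocircuit {m E : Type*} [Fintype m] [Fintype E] {A : Matrix m E ℝ}
    (hA : A.IsTotallyUnimodular) {P : E → ℝ} (hP : ∃ y, Matrix.vecMul y A = P)
    (hPs : Simple P) (hP0 : P ≠ 0) :
    ∃ C, SignedCocircuit A C ∧ (∀ x, C x ≠ 0 → C x = P x) := by
  classical
  set S : Set (E → ℝ) :=
    {v | (∃ y, Matrix.vecMul y A = v) ∧ v ≠ 0 ∧ ∀ x, v x ≠ 0 → 0 < v x * P x} with hS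
  have hPS : P ∈ S := ⟨hP, hP0, fun x hx => mul_self_pos.mpr hx⟩
  obtain ⟨C₀, hC₀S, hC₀min⟩ := exists_min_on_set ⟨P, hPS⟩ (fun v => (supp v).ncard)
  obtain ⟨hC₀row, hC₀ne, hC₀conf⟩ := hC₀S
  have hminsup : ∀ D : E → ℝ, (∃ y, Matrix.vecMul y A = D) → D ≠ 0 → supp D ⊆ supp C₀ →
      supp D = supp C₀ := by
    intro D hDrow hDne hDsub
    by_contra hne
    have hssub : supp D ⊂ supp C₀ := ⟨hDsub, fun h => hne (subset_antisymm hDsub h)⟩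
    obtain ⟨x₁, hx₁C, hx₁D⟩ := Set.exists_of_ssubset hssub
    have hx₁D0 : D x₁ = 0 := not_not.mp hx₁D
    have hDsupp_ne : (supp D).Nonempty := by
      rcases Function.ne_iff.mp hDne with ⟨x, hx⟩
      exact ⟨x, hx⟩
    have hfin : (supp D).Finite := Set.toFinite _
    obtain ⟨xs, hxs, hxsmin⟩ := Finset.exists_min_image hfin.toFinset
      (fun x => |C₀ x| / |D x|) (by rwa [Set.Finite.toFinset_nonempty])
    rw [Set.Finite.mem_toFinset] at hxs
    have hDxs : D xs ≠ 0 := hxs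
    set tt : ℝ := C₀ xs / D xs with htt
    set V : E → ℝ := C₀ - tt • D with hV
    have hVval : ∀ x, V x = C₀ x - tt * D x := fun x => rfl
    have hVrow : ∃ y, Matrix.vecMul y A = V := by
      obtain ⟨y1, hy1⟩ := hC₀row; obtain ⟨y2, hy2⟩ := hDrow
      exact ⟨y1 - tt • y2, by rw [Matrix.sub_vecMul, Matrix.smul_vecMul, hy1, hy2]⟩
    have hkey : ∀ x, D x ≠ 0 → |tt * D x| ≤ |C₀ x| := by
      intro x hDx
      have h1 : |C₀ xs| / |D xs| ≤ |C₀ x| / |D x| :=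
        hxsmin x (by rwa [Set.Finite.mem_toFinset])
      have h2 : |tt| = |C₀ xs| / |D xs| := abs_div _ _
      have h3 : |tt * D x| = |tt| * |D x| := abs_mul _ _
      rw [h3, h2]
      calc |C₀ xs| / |D xs| * |D x| ≤ |C₀ x| / |D x| * |D x| :=
            mul_le_mul_of_nonneg_right h1 (abs_nonneg _)
        _ = |C₀ x| := div_mul_cancel₀ _ (abs_ne_zero.mpr hDx)
    have hVxs : V xs = 0 := by
      rw [hVval, htt, div_mul_cancel₀ _ hDxs, sub_self]
    have hVne : V ≠ 0 := by
      intro h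
      apply hx₁C
      have : V x₁ = 0 := by rw [h]; rfl
      rw [hVval, hx₁D0, mul_zero, sub_zero] at this
      exact this
    have hVsupp : supp V ⊆ supp C₀ := by
      intro x hx
      by_cases hDx : D x = 0
      · rw [mem_supp] at hx ⊢
        rwa [hVval, hDx, mul_zero, sub_zero] at hx
      · exact hDsub hDx
    have hV_S : V ∈ S := by
      refine ⟨hVrow, hVne, fun x hx => ?_⟩
      by_cases hDx : D x = 0
      · rw [hVval, hDx, mul_zero, sub_zero] at hx ⊢
        exact hC₀conf x hx
      · have hC₀x : C₀ x ≠ 0 := hDsub hDx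
        have hsk : 0 < (C₀ x - tt * D x) * C₀ x :=
          sign_key (hkey x hDx) (by rwa [hVval] at hx)
        have hcp := hC₀conf x hC₀x
        rw [hVval]
        nlinarith [mul_pos hsk hcp, sq_nonneg (C₀ x)]
    have hstrict : supp V ⊂ supp C₀ := by
      refine ⟨hVsupp, fun hsub => ?_⟩
      have : xs ∈ supp V := hsub (hDsub hxs)
      rw [mem_supp] at this
      exact this hVxs
    have := hC₀min V hV_S
    have hlt := Set.ncard_lt_ncard hstrict (Set.toFinite _)
    omega
  obtain ⟨x₀, hx₀⟩ : (supp C₀).Nonempty := by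
    rcases Function.ne_iff.mp hC₀ne with ⟨x, hx⟩
    exact ⟨x, hx⟩
  have hC₀x₀ : C₀ x₀ ≠ 0 := hx₀
  set w : E → ℝ := (C₀ x₀)⁻¹ • C₀ with hw
  have hwval : ∀ x, w x = (C₀ x₀)⁻¹ * C₀ x := fun x => rfl
  have hsuppw : supp w = supp C₀ := by
    ext x
    rw [mem_supp, mem_supp, hwval]
    constructor
    · intro h h0; exact h (by rw [h0, mul_zero])
    · intro h; exact mul_ne_zero (inv_ne_zero hC₀x₀) h
  have hwx₀ : w x₀ = 1 := by rw [hwval, inv_mul_cancel₀ hC₀x₀]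
  obtain ⟨y₀, hy₀⟩ : ∃ y, Matrix.vecMul y A = w := by
    obtain ⟨y1, hy1⟩ := hC₀row
    exact ⟨(C₀ x₀)⁻¹ • y1, by rw [Matrix.smul_vecMul, hy1]⟩
  have hwmin : ∀ D : E → ℝ, (∃ y, Matrix.vecMul y A = D) → D ≠ 0 → supp D ⊆ supp w →
      supp D = supp w := by
    intro D h1 h2 h3
    rw [hsuppw] at h3 ⊢
    exact hminsup D h1 h2 h3
  have hwSimple : Simple w := simple_of_minimal_support hA hy₀ hwx₀ hwmin
  -- the signed cocircuit
  set σ : ℝ := if 0 < C₀ x₀ then (1 : ℝ) else -1 with hσ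
  set C : E → ℝ := σ • w with hC
  have hCval : ∀ x, C x = σ * w x := fun x => rfl
  have hτ : ∀ x, C x = (σ * (C₀ x₀)⁻¹) * C₀ x := by
    intro x; rw [hCval, hwval]; ring
  have hτpos : 0 < σ * (C₀ x₀)⁻¹ := by
    rw [hσ]
    rcases lt_or_gt_of_ne hC₀x₀ with hneg | hpos
    · rw [if_neg (by linarith)]
      have : (C₀ x₀)⁻¹ < 0 := inv_neg''.mpr hneg
      nlinarith
    · rw [if_pos hpos]
      have : 0 < (C₀ x₀)⁻¹ := inv_pos.mpr hpos
      linarith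
  have hCsimple : Simple C := by
    intro x
    rcases hwSimple x with h | h | h <;> rw [hCval, h, hσ] <;> split <;> norm_num
  have hsuppC : supp C = supp C₀ := by
    ext x
    rw [mem_supp, mem_supp, hτ]
    constructor
    · intro h h0; exact h (by rw [h0, mul_zero])
    · intro h; exact mul_ne_zero (ne_of_gt hτpos) h
  have hCne : C ≠ 0 := by
    intro h
    apply hC₀x₀
    have : C x₀ = 0 := by rw [h]; rfl
    rw [hτ] at this
    exact (mul_eq_zero.mp this).resolve_left (ne_of_gt hτpos)
  have hCrow : ∃ y, Matrix.vecMul y A = C := by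
    exact ⟨σ • y₀, by rw [Matrix.smul_vecMul, hy₀]⟩
  have hCconf : ∀ x, C x ≠ 0 → C x = P x := by
    intro x hCx
    have hC₀x : C₀ x ≠ 0 := by
      intro h0
      exact hCx (by rw [hτ, h0, mul_zero])
    have hpos1 : 0 < C x * P x := by
      have := hC₀conf x hC₀x
      rw [hτ]
      nlinarith [hτpos]
    have hPx : P x ≠ 0 := by
      intro h0; rw [h0, mul_zero] at hpos1; exact lt_irrefl 0 hpos1
    rcases hCsimple x with h1 | h1 | h1 <;> rcases hPs x with h2 | h2 | h2 <;>
      rw [h1, h2] <;> rw [h1, h2] at hpos1 <;> first | rfl | linarith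
  refine ⟨C, ⟨hCrow, hCne, hCsimple, ?_⟩, hCconf⟩
  intro D h1 h2 h3
  rw [hsuppC] at h3 ⊢
  exact hminsup D h1 h2 h3

end Auxiliary

theorem simple_rowspace_vector_decomposes_into_disjoint_conformal_cocircuits
    {m E : Type*} [Fintype m] [Fintype E] (A : Matrix m E ℝ)
    (hA : A.IsTotallyUnimodular) (P : E → ℝ) (hP : ∃ y, Matrix.vecMul y A = P)
    (hPs : Simple P) :
    ∃ (n : ℕ) (c : Fin n → (E → ℝ)),
      (∀ i, SignedCocircuit A (c i)) ∧
      (Pairwise fun i j => supp (c i) ∩ supp (c j) = ∅) ∧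
      (∀ i, ∀ x ∈ supp (c i), c i x = P x) ∧
      P = ∑ i, c i := by
  classical
  suffices h : ∀ N : ℕ, ∀ P : E → ℝ, (∃ y, Matrix.vecMul y A = P) → Simple P →
      (supp P).ncard ≤ N →
      ∃ (n : ℕ) (c : Fin n → (E → ℝ)),
        (∀ i, SignedCocircuit A (c i)) ∧
        (Pairwise fun i j => supp (c i) ∩ supp (c j) = ∅) ∧
        (∀ i, ∀ x ∈ supp (c i), c i x = P x) ∧
        P = ∑ i, c i by
    exact h _ P hP hPs le_rfl
  intro N
  induction N with
  | zero =>
    intro P hP hPs hcard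
    have hempty : supp P = ∅ := by
      have := Nat.le_zero.mp hcard
      exact (Set.ncard_eq_zero (Set.toFinite _)).mp this
    have hP0 : P = 0 := by
      funext x
      by_contra hx
      exact absurd (show x ∈ supp P from hx) (by rw [hempty]; exact Set.notMem_empty x)
    refine ⟨0, fun i => i.elim0, fun i => i.elim0, fun i => i.elim0, fun i => i.elim0, ?_⟩
    rw [hP0]
    simp
  | succ N ih =>
    intro P hP hPs hcard
    by_cases hP0 : P = 0
    · refine ⟨0, fun i => i.elim0, fun i => i.elim0, fun i => i.elim0, fun i => i.elim0, ?_⟩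
      rw [hP0]
      simp
    · obtain ⟨C, hCco, hCconf⟩ := exists_conformal_cocircuit hA hP hPs hP0
      obtain ⟨hCrow, hCne, hCsimple, hCmin⟩ := hCco
      have hCsub : supp C ⊆ supp P := by
        intro x hx
        rw [mem_supp] at hx ⊢
        rw [← hCconf x hx]
        exact hx
      set P' : E → ℝ := P - C with hP'
      have hP'val : ∀ x, P' x = if C x = 0 then P x else 0 := by
        intro x
        by_cases h : C x = 0
        · rw [if_pos h]
          show P x - C x = P x
          rw [h, sub_zero]
        · rw [if_neg h]
          show P x - C x = 0
          rw [hCconf x h, sub_self]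
      have hP'row : ∃ y, Matrix.vecMul y A = P' := by
        obtain ⟨y1, hy1⟩ := hP
        obtain ⟨y2, hy2⟩ := hCrow
        exact ⟨y1 - y2, by rw [Matrix.sub_vecMul, hy1, hy2]⟩
      have hP'simple : Simple P' := by
        intro x
        rw [hP'val]
        split
        · exact hPs x
        · right; left; rfl
      have hsupp' : supp P' = supp P \ supp C := by
        ext x
        rw [mem_supp, Set.mem_diff, mem_supp, mem_supp, hP'val]
        split
        · simp_all
        · simp_all
      have hCsupp_ne : (supp C).Nonempty := by
        rcases Function.ne_iff.mp hCne with ⟨x, hx⟩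
        exact ⟨x, hx⟩
      obtain ⟨xC, hxC⟩ := hCsupp_ne
      have hstrict : supp P' ⊂ supp P := by
        rw [hsupp']
        refine ⟨Set.diff_subset, fun hsub => ?_⟩
        have := hsub (hCsub hxC)
        exact this.2 hxC
      have hcard' : (supp P').ncard ≤ N := by
        have hlt := Set.ncard_lt_ncard hstrict (Set.toFinite _)
        omega
      obtain ⟨n, c, h1, h2, h3, h4⟩ := ih P' hP'row hP'simple hcard'
      have hc_sub : ∀ j : Fin n, supp (c j) ⊆ supp P' := by
        intro j x hx
        rw [mem_supp] at hx ⊢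
        rw [← h3 j x hx]
        exact hx
      have hc_zero : ∀ j : Fin n, ∀ x ∈ supp (c j), C x = 0 := by
        intro j x hx
        have := hc_sub j hx
        rw [hsupp'] at this
        exact not_not.mp this.2
      have hdisj : ∀ j : Fin n, supp (c j) ∩ supp C = ∅ := by
        intro j
        apply Set.eq_empty_iff_forall_notMem.mpr
        rintro x ⟨hxc, hxC2⟩
        exact hxC2 (hc_zero j x hxc)
      refine ⟨n + 1, Fin.cons C c, ?_, ?_, ?_, ?_⟩
      · intro i
        refine Fin.cases ?_ ?_ i
        · exact ⟨hCrow, hCne, hCsimple, hCmin⟩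
        · intro j
          simpa [Fin.cons_succ] using h1 j
      · intro i j hij
        rcases Fin.eq_zero_or_eq_succ i with rfl | ⟨i', rfl⟩ <;>
          rcases Fin.eq_zero_or_eq_succ j with rfl | ⟨j', rfl⟩
        · exact absurd rfl hij
        · simp only [Fin.cons_zero, Fin.cons_succ]
          rw [Set.inter_comm]
          exact hdisj j'
        · simp only [Fin.cons_zero, Fin.cons_succ]
          exact hdisj i'
        · simp only [Fin.cons_succ]
          exact h2 (fun h => hij (by rw [h]))
      · intro i
        refine Fin.cases ?_ ?_ i
        · intro x hx
          rw [show (Fin.cons C c : Fin (n+1) → E → ℝ) 0 = C from rfl] at hx ⊢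
          exact hCconf x hx
        · intro j x hx
          rw [show (Fin.cons C c : Fin (n+1) → E → ℝ) j.succ = c j from rfl] at hx ⊢
          have hcx := h3 j x hx
          rw [hcx, hP'val, if_pos (hc_zero j x hx)]
      · rw [Fin.sum_univ_succ]
        simp only [Fin.cons_zero, Fin.cons_succ]
        rw [← h4, hP']
        abel
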